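/- arXiv:1006.1807 — 7 statements merged into one kernel-verified Lean document; each statement's English description precedes it below -/
import Mathlib

section
/- Let u_1, ..., u_{d+1} be the inward unit normals of the facets of a d-dimensional simplex in R^d. Then the (d+1)×(d+1) matrix A with entries a_ij = -⟨u_i, u_j⟩ is negative semidefinite of rank d, and its kernel is spanned by a vector with all coordinates strictly positive. -/
open RealInnerProductSpace

/-- A real matrix is negative semidefinite iff its negation is positive semidefinite. -/
def Matrix.NegSemidef {n : Type*} [Fintype n] (A : Matrix n n ℝ) : Prop :=
  (-A).PosSemidef

theorem stmt_5 (d : ℕ) (hd : 0 < d)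
    (v : Fin (d + 1) → EuclideanSpace ℝ (Fin d)) (hv : AffineIndependent ℝ v)
    (u : Fin (d + 1) → EuclideanSpace ℝ (Fin d))
    (hunit : ∀ i, ‖u i‖ = 1)
    -- u i is orthogonal to the facet F_i (the facet spanned by the vertices other than v i)
    (horth : ∀ i j k, j ≠ i → k ≠ i → ⟪u i, v j - v k⟫ = 0)
    -- u i points toward the interior of the simplex, i.e. toward the vertex v i
    (hinward : ∀ i j, j ≠ i → 0 < ⟪u i, v i - v j⟫)
    (A : Matrix (Fin (d + 1)) (Fin (d + 1)) ℝ)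
    (hA : ∀ i j, A i j = - ⟪u i, u j⟫) :
    A.NegSemidef ∧ A.rank = d ∧
      ∃ z : Fin (d + 1) → ℝ, (∀ i, 0 < z i) ∧ A.mulVec z = 0 ∧
        ∀ y : Fin (d + 1) → ℝ, A.mulVec y = 0 → ∃ c : ℝ, y = c • z := by
  classical
  set h : Fin (d+1) → Fin (d+1) → ℝ := fun i j => ⟪u i, v i - v j⟫ with hhdef
  have hpos : ∀ i j, j ≠ i → 0 < h i j := fun i j hij => hinward i j hij
  -- key lemma: any linear dependence satisfies the balance equations
  have key : ∀ (y : Fin (d+1) → ℝ), (∑ i, y i • u i) = 0 → ∀ j k, j ≠ k →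
      y j * h j k = y k * h k j := by
    intro y hy j k hjk
    have h0 : ⟪(∑ i, y i • u i), v j - v k⟫ = 0 := by rw [hy]; simp
    rw [sum_inner] at h0
    have hterm : ∀ i, ⟪y i • u i, v j - v k⟫ = y i * ⟪u i, v j - v k⟫ := by
      intro i; rw [real_inner_smul_left]
    rw [Finset.sum_congr rfl (fun i _ => hterm i)] at h0
    have hsum : ∑ i, y i * ⟪u i, v j - v k⟫ =
        y j * ⟪u j, v j - v k⟫ + y k * ⟪u k, v j - v k⟫ := by
      apply Finset.sum_eq_add_of_mem j k (Finset.mem_univ j) (Finset.mem_univ k) hjk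
      intro m _ hm
      rw [horth m j k (Ne.symm hm.1) (Ne.symm hm.2)]
      ring
    have hk' : ⟪u k, v j - v k⟫ = -h k j := by
      have : v j - v k = -(v k - v j) := by abel
      rw [this, inner_neg_right]
    rw [hsum, hk'] at h0
    linarith
  -- mulVec in terms of inner products
  have hmv : ∀ (y : Fin (d+1) → ℝ) (i : Fin (d+1)),
      A.mulVec y i = - ⟪u i, ∑ j, y j • u j⟫ := by
    intro y i
    rw [inner_sum]
    simp only [Matrix.mulVec, dotProduct, hA, real_inner_smul_right]
    rw [← Finset.sum_neg_distrib]
    congr 1; ext j; ring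
  -- mulVec y = 0 iff ∑ y i • u i = 0
  have hker : ∀ (y : Fin (d+1) → ℝ), A.mulVec y = 0 ↔ (∑ i, y i • u i) = 0 := by
    intro y
    constructor
    · intro hy
      have hw : ⟪(∑ i, y i • u i), (∑ j, y j • u j)⟫ = 0 := by
        rw [sum_inner]
        have : ∀ i, ⟪y i • u i, ∑ j, y j • u j⟫ = y i * ⟪u i, ∑ j, y j • u j⟫ := by
          intro i; rw [real_inner_smul_left]
        rw [Finset.sum_congr rfl (fun i _ => this i)]
        apply Finset.sum_eq_zero
        intro i _
        have := hmv y i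
        rw [congrFun hy i] at this
        have h2 : ⟪u i, ∑ j, y j • u j⟫ = 0 := by
          have := this.symm
          simpa [neg_eq_zero] using this
        rw [h2]; ring
      exact inner_self_eq_zero.mp hw
    · intro hy
      funext i
      rw [hmv y i, hy]
      simp
  -- existence of a nontrivial dependence
  have hnli : ¬ LinearIndependent ℝ u := by
    intro hli
    have hcard := hli.fintype_card_le_finrank
    rw [finrank_euclideanSpace_fin] at hcard
    simp at hcard
  obtain ⟨g, hg, i₀, hgi₀⟩ := Fintype.not_linearIndependent_iff.mp hnli
  -- all coordinates of g are nonzero and of the same sign as g i₀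
  have hgall : ∀ j, j ≠ i₀ → g j = g i₀ * h i₀ j / h j i₀ := by
    intro j hj
    have := key g hg j i₀ hj
    have hne : h j i₀ ≠ 0 := ne_of_gt (hpos j i₀ (Ne.symm hj))
    field_simp
    linarith [this]
  -- build a positive kernel vector
  set z : Fin (d+1) → ℝ := fun j => if g i₀ > 0 then g j else -g j with hzdef
  have hzsum : (∑ i, z i • u i) = 0 := by
    by_cases hgp : g i₀ > 0
    · simp only [hzdef, if_pos hgp]; exact hg
    · simp only [hzdef, if_neg hgp, neg_smul]
      rw [Finset.sum_neg_distrib, hg, neg_zero]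
  have hzi₀ : 0 < z i₀ := by
    by_cases hgp : g i₀ > 0
    · simp only [hzdef, if_pos hgp]; exact hgp
    · simp only [hzdef, if_neg hgp]
      push_neg at hgp
      rcases lt_or_eq_of_le hgp with h1 | h1
      · linarith
      · exact absurd h1 hgi₀
  have hzpos : ∀ j, 0 < z j := by
    intro j
    by_cases hj : j = i₀
    · rw [hj]; exact hzi₀
    · have hbal := key z hzsum j i₀ hj
      have h1 : 0 < h j i₀ := hpos j i₀ (Ne.symm hj)
      have h2 : 0 < h i₀ j := hpos i₀ j hj
      nlinarith
  have hzmv : A.mulVec z = 0 := (hker z).mpr hzsum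
  -- everything in the kernel is a multiple of z
  have huniq : ∀ y : Fin (d + 1) → ℝ, A.mulVec y = 0 → ∃ c : ℝ, y = c • z := by
    intro y hy
    have hysum := (hker y).mp hy
    refine ⟨y i₀ / z i₀, ?_⟩
    funext j
    by_cases hj : j = i₀
    · rw [hj]
      rw [Pi.smul_apply, smul_eq_mul, div_mul_cancel₀ _ (ne_of_gt hzi₀)]
    · have hby := key y hysum j i₀ hj
      have hbz := key z hzsum j i₀ hj
      have h1 : 0 < h j i₀ := hpos j i₀ (Ne.symm hj)
      have h2 : 0 < h i₀ j := hpos i₀ j hj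
      have hz0 : z i₀ ≠ 0 := ne_of_gt hzi₀
      simp only [Pi.smul_apply, smul_eq_mul]
      rw [div_mul_eq_mul_div, eq_div_iff hz0]
      have e : y j * z i₀ * h j i₀ = y i₀ * z j * h j i₀ := by
        calc y j * z i₀ * h j i₀ = (y j * h j i₀) * z i₀ := by ring
        _ = (y i₀ * h i₀ j) * z i₀ := by rw [hby]
        _ = y i₀ * (z j * h j i₀) := by rw [hbz]; ring
        _ = y i₀ * z j * h j i₀ := by ring
      exact mul_right_cancel₀ (ne_of_gt h1) e
  -- negative semidefiniteness via Gram matrix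
  have hnsd : A.NegSemidef := by
    unfold Matrix.NegSemidef
    set B : Matrix (Fin d) (Fin (d+1)) ℝ := Matrix.of (fun k i => u i k) with hB
    have hBA : -A = B.conjTranspose * B := by
      ext i j
      simp only [Matrix.neg_apply, hA, neg_neg, Matrix.mul_apply,
        Matrix.conjTranspose_apply, hB, Matrix.of_apply, star_trivial]
      rw [PiLp.inner_apply]
      simp [RCLike.inner_apply, starRingEnd_apply]
      exact Finset.sum_congr rfl (fun x _ => mul_comm _ _)
    rw [hBA]
    exact Matrix.posSemidef_conjTranspose_mul_self B
  -- rank computation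
  have hkerspan : LinearMap.ker A.mulVecLin = Submodule.span ℝ {z} := by
    ext y
    rw [LinearMap.mem_ker, Matrix.mulVecLin_apply, Submodule.mem_span_singleton]
    constructor
    · intro hy
      obtain ⟨c, hc⟩ := huniq y hy
      exact ⟨c, hc.symm⟩
    · rintro ⟨c, rfl⟩
      rw [Matrix.mulVec_smul, hzmv]
      simp
  have hzne : z ≠ 0 := fun hz => by
    have := hzpos i₀; rw [hz] at this; simp at this
  have hrank : A.rank = d := by
    have h1 := LinearMap.finrank_range_add_finrank_ker A.mulVecLin
    rw [hkerspan, finrank_span_singleton hzne] at h1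
    have h2 : Module.finrank ℝ (Fin (d+1) → ℝ) = d + 1 := by
      simp
    rw [h2] at h1
    have : A.rank = Module.finrank ℝ (LinearMap.range A.mulVecLin) := rfl
    omega
  exact ⟨hnsd, hrank, z, hzpos, hzmv, huniq⟩
end

section
/- The sum of the angles of a spherical triangle on the unit sphere is strictly greater than π. Equivalently: the three dihedral angles of a tetrahedron adjacent to one of its vertices have sum greater than π. -/
open RealInnerProductSpace

/-- The spherical angle at the vertex `a` of a spherical triangle with other
vertices `b`, `c` on the unit sphere: the angle between the tangent directions
at `a` of the great-circle arcs from `a` to `b` and from `a` to `c`, i.e. the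
angle between the projections of `b` and `c` to the tangent plane at `a`. -/
noncomputable def sphericalAngle (a b c : EuclideanSpace ℝ (Fin 3)) : ℝ :=
  InnerProductGeometry.angle (b - ⟪a, b⟫ • a) (c - ⟪a, c⟫ • a)

namespace SphAux

open InnerProductGeometry Real

variable {E : Type*} [NormedAddCommGroup E] [InnerProductSpace ℝ E]

/-- Strict triangle inequality for angles between vectors, under a
non-coplanarity hypothesis. -/
lemma strict_angle_triangle {u m w : E} (hu : ‖u‖ = 1) (hm : ‖m‖ = 1) (hw : ‖w‖ = 1)
    (h1 : ∀ s : ℝ, u ≠ s • m) (h2 : ∀ s t : ℝ, w ≠ s • u + t • m) :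
    angle u w < angle u m + angle m w := by
  by_cases hπ : angle u m + angle m w < π
  case neg =>
    have hne : angle u w ≠ π := by
      intro h
      rcases angle_eq_pi_iff.mp h with ⟨_, r, hr, hwr⟩
      exact h2 r 0 (by simp [hwr])
    have := lt_of_le_of_ne (angle_le_pi u w) hne
    push_neg at hπ
    linarith
  case pos =>
  have hmm : ⟪m, m⟫ = 1 := by rw [real_inner_self_eq_norm_sq, hm]; norm_num
  have huu : ⟪u, u⟫ = 1 := by rw [real_inner_self_eq_norm_sq, hu]; norm_num
  have hww : ⟪w, w⟫ = 1 := by rw [real_inner_self_eq_norm_sq, hw]; norm_num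
  set u1 := u - ⟪u, m⟫ • m with hu1def
  set w1 := w - ⟪w, m⟫ • m with hw1def
  have hu1 : ⟪u1, u1⟫ = 1 - ⟪u, m⟫ ^ 2 := by
    simp only [hu1def, inner_sub_left, inner_sub_right, real_inner_smul_left,
      real_inner_smul_right, hmm, huu, real_inner_comm m u]
    ring
  have hw1 : ⟪w1, w1⟫ = 1 - ⟪w, m⟫ ^ 2 := by
    simp only [hw1def, inner_sub_left, inner_sub_right, real_inner_smul_left,
      real_inner_smul_right, hmm, hww, real_inner_comm m w]
    ring
  have huw1 : ⟪u1, w1⟫ = ⟪u, w⟫ - ⟪u, m⟫ * ⟪w, m⟫ := by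
    simp only [hu1def, hw1def, inner_sub_left, inner_sub_right, real_inner_smul_left,
      real_inner_smul_right, hmm, real_inner_comm m w]
    ring
  have hcosα : Real.cos (angle u m) = ⟪u, m⟫ := by rw [cos_angle, hu, hm]; simp
  have hcosβ : Real.cos (angle m w) = ⟪w, m⟫ := by
    rw [cos_angle, hw, hm, real_inner_comm]; simp
  have hcosγ : Real.cos (angle u w) = ⟪u, w⟫ := by rw [cos_angle, hu, hw]; simp
  have hsinα : Real.sin (angle u m) = ‖u1‖ := by
    rw [Real.sin_eq_sqrt_one_sub_cos_sq (angle_nonneg _ _) (angle_le_pi _ _), hcosα,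
      norm_eq_sqrt_real_inner, hu1]
  have hsinβ : Real.sin (angle m w) = ‖w1‖ := by
    rw [Real.sin_eq_sqrt_one_sub_cos_sq (angle_nonneg _ _) (angle_le_pi _ _), hcosβ,
      norm_eq_sqrt_real_inner, hw1]
  have hu1ne : u1 ≠ 0 := by
    intro h
    exact h1 ⟪u, m⟫ (by rw [← sub_eq_zero]; exact h)
  have hstrict : -(‖u1‖ * ‖w1‖) < ⟪u1, w1⟫ := by
    have hle : ⟪-u1, w1⟫ ≤ ‖(-u1 : E)‖ * ‖w1‖ := real_inner_le_norm _ _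
    rcases lt_or_eq_of_le hle with h | h
    · rw [inner_neg_left, norm_neg] at h; linarith
    · exfalso
      rw [inner_eq_norm_mul_iff_real] at h
      have h' := h.symm
      rw [norm_neg] at h'
      have hnu1 : (0:ℝ) < ‖u1‖ := norm_pos_iff.mpr hu1ne
      have h2' := congrArg (fun z => (‖u1‖⁻¹ : ℝ) • z) h'
      simp only [smul_smul, inv_mul_cancel₀ (ne_of_gt hnu1), one_smul] at h2'
      obtain ⟨cst, hcst⟩ : ∃ c : ℝ, w1 = c • u1 :=
        ⟨-(‖u1‖⁻¹ * ‖w1‖), by rw [neg_smul, ← smul_neg]; exact h2'⟩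
      rw [hu1def, hw1def] at hcst
      apply h2 cst (⟪w, m⟫ - cst * ⟪u, m⟫)
      conv_lhs => rw [show w = (w - ⟪w, m⟫ • m) + ⟪w, m⟫ • m by abel]
      rw [hcst]
      module
  have hkey : Real.cos (angle u m + angle m w) < Real.cos (angle u w) := by
    rw [Real.cos_add, hcosα, hcosβ, hsinα, hsinβ, hcosγ]
    have : ⟪u, w⟫ = ⟪u, m⟫ * ⟪w, m⟫ + ⟪u1, w1⟫ := by rw [huw1]; ring
    rw [this]
    nlinarith [hstrict]
  by_contra hcon
  push_neg at hcon
  rcases eq_or_lt_of_le hcon with h | h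
  · rw [h] at hkey; exact lt_irrefl _ hkey
  · have := Real.strictAntiOn_cos ⟨add_nonneg (angle_nonneg u m) (angle_nonneg m w), le_of_lt hπ⟩
      ⟨angle_nonneg u w, angle_le_pi u w⟩ h
    linarith

/-- Coordinate cross product on `EuclideanSpace ℝ (Fin 3)`. -/
noncomputable def cp (x y : EuclideanSpace ℝ (Fin 3)) : EuclideanSpace ℝ (Fin 3) :=
  (WithLp.equiv 2 (Fin 3 → ℝ)).symm
    ![x 1 * y 2 - x 2 * y 1, x 2 * y 0 - x 0 * y 2, x 0 * y 1 - x 1 * y 0]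

lemma cp_apply (x y : EuclideanSpace ℝ (Fin 3)) :
    cp x y 0 = x 1 * y 2 - x 2 * y 1 ∧ cp x y 1 = x 2 * y 0 - x 0 * y 2 ∧
      cp x y 2 = x 0 * y 1 - x 1 * y 0 := by
  refine ⟨?_, ?_, ?_⟩ <;> simp [cp, PiLp.toLp_apply]

lemma dot_eq (x y : EuclideanSpace ℝ (Fin 3)) : ⟪x, y⟫ = x 0 * y 0 + x 1 * y 1 + x 2 * y 2 := by
  simp [PiLp.inner_apply, Fin.sum_univ_three, RCLike.inner_apply, conj_trivial]
  ring

lemma inner_cp_cp (x y z t : EuclideanSpace ℝ (Fin 3)) :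
    ⟪cp x y, cp z t⟫ = ⟪x, z⟫ * ⟪y, t⟫ - ⟪x, t⟫ * ⟪y, z⟫ := by
  simp only [dot_eq, (cp_apply x y).1, (cp_apply x y).2.1, (cp_apply x y).2.2,
    (cp_apply z t).1, (cp_apply z t).2.1, (cp_apply z t).2.2]
  ring

lemma cp_anticomm (x y : EuclideanSpace ℝ (Fin 3)) : cp y x = -cp x y := by
  ext i
  fin_cases i <;>
    simp [cp, PiLp.toLp_apply, PiLp.neg_apply] <;> ring

lemma inner_cp_rot (x y z : EuclideanSpace ℝ (Fin 3)) :
    ⟪cp x y, z⟫ = ⟪cp y z, x⟫ := by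
  simp only [dot_eq, (cp_apply x y).1, (cp_apply x y).2.1, (cp_apply x y).2.2,
    (cp_apply y z).1, (cp_apply y z).2.1, (cp_apply y z).2.2]
  ring

lemma inner_cp_left (x y : EuclideanSpace ℝ (Fin 3)) : ⟪cp x y, x⟫ = 0 := by
  simp only [dot_eq, (cp_apply x y).1, (cp_apply x y).2.1, (cp_apply x y).2.2]; ring

lemma inner_cp_right (x y : EuclideanSpace ℝ (Fin 3)) : ⟪cp x y, y⟫ = 0 := by
  simp only [dot_eq, (cp_apply x y).1, (cp_apply x y).2.1, (cp_apply x y).2.2]; ring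

lemma triple_ne_zero {a b c : EuclideanSpace ℝ (Fin 3)}
    (hgen : LinearIndependent ℝ ![a, b, c]) : ⟪cp a b, c⟫ ≠ 0 := by
  set e := WithLp.linearEquiv 2 ℝ (Fin 3 → ℝ) with he
  have hmap : LinearIndependent ℝ (⇑e.toLinearMap ∘ ![a, b, c]) :=
    hgen.map' e.toLinearMap e.ker
  set A : Matrix (Fin 3) (Fin 3) ℝ := Matrix.of (⇑e.toLinearMap ∘ ![a, b, c]) with hA
  have hAi : LinearIndependent ℝ (fun i => A i) := hmap
  have hdet : IsUnit A.det := (Matrix.isUnit_iff_isUnit_det A).mp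
    (Matrix.linearIndependent_rows_iff_isUnit.mp hAi)
  have hAd : A.det = ⟪cp a b, c⟫ := by
    rw [Matrix.det_fin_three]
    simp only [dot_eq, (cp_apply a b).1, (cp_apply a b).2.1, (cp_apply a b).2.2]
    show a 0 * b 1 * c 2 - a 0 * b 2 * c 1 - a 1 * b 0 * c 2 + a 1 * b 2 * c 0 +
      a 2 * b 0 * c 1 - a 2 * b 1 * c 0 = _
    ring
  rw [hAd] at hdet
  exact hdet.ne_zero

lemma angle_congr {x y x' y' : E} (h1 : ⟪x, x⟫ = ⟪x', x'⟫) (h2 : ⟪y, y⟫ = ⟪y', y'⟫)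
    (h3 : ⟪x, y⟫ = ⟪x', y'⟫) : angle x y = angle x' y' := by
  unfold angle
  rw [norm_eq_sqrt_real_inner x, norm_eq_sqrt_real_inner y, norm_eq_sqrt_real_inner x',
    norm_eq_sqrt_real_inner y', h1, h2, h3]

lemma proj_inner {a x y : E} (haa : ⟪a, a⟫ = 1) :
    ⟪x - ⟪a, x⟫ • a, y - ⟪a, y⟫ • a⟫ = ⟪x, y⟫ - ⟪a, x⟫ * ⟪a, y⟫ := by
  simp only [inner_sub_left, inner_sub_right, real_inner_smul_left, real_inner_smul_right,
    haa, real_inner_comm x a]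
  ring

lemma sphere_angle_eq {a b c : EuclideanSpace ℝ (Fin 3)} (ha : ‖a‖ = 1) :
    sphericalAngle a b c = angle (cp a b) (cp a c) := by
  have haa : ⟪a, a⟫ = 1 := by rw [real_inner_self_eq_norm_sq, ha]; norm_num
  unfold sphericalAngle
  apply angle_congr
  · rw [proj_inner haa, inner_cp_cp, haa, real_inner_comm b a]; ring
  · rw [proj_inner haa, inner_cp_cp, haa, real_inner_comm c a]; ring
  · rw [proj_inner haa, inner_cp_cp, haa, real_inner_comm b a, real_inner_comm c a]; ring

end SphAux

theorem stmt_7 (a b c : EuclideanSpace ℝ (Fin 3))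
    (ha : ‖a‖ = 1) (hb : ‖b‖ = 1) (hc : ‖c‖ = 1)
    (hgen : LinearIndependent ℝ ![a, b, c]) :
    Real.pi < sphericalAngle a b c + sphericalAngle b c a + sphericalAngle c a b := by
  open SphAux InnerProductGeometry in
  set u := cp b c with hudef
  set v := cp c a with hvdef
  set w := cp a b with hwdef
  set D := ⟪cp a b, c⟫ with hDdef
  have hD : D ≠ 0 := triple_ne_zero hgen
  have hua : ⟪u, a⟫ = D := by rw [hudef, hDdef, inner_cp_rot a b c]
  have hvb : ⟪v, b⟫ = D := by rw [hvdef, hDdef, inner_cp_rot a b c, inner_cp_rot b c a]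
  have hwc : ⟪w, c⟫ = D := rfl
  have hcomb : ∀ r s t : ℝ, r • u + s • v + t • w = 0 → r = 0 ∧ s = 0 ∧ t = 0 := by
    intro r s t h
    have hha := congrArg (fun z => ⟪z, a⟫) h
    have hhb := congrArg (fun z => ⟪z, b⟫) h
    have hhc := congrArg (fun z => ⟪z, c⟫) h
    simp only [inner_add_left, real_inner_smul_left, inner_zero_left, hua, hvb, hwc,
      hudef, hvdef, hwdef, inner_cp_left, inner_cp_right] at hha hhb hhc
    refine ⟨?_, ?_, ?_⟩
    · have : r * D = 0 := by rw [hDdef, inner_cp_rot a b c]; linarith [hha]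
      exact (mul_eq_zero.mp this).resolve_right hD
    · have : s * D = 0 := by
        rw [hDdef, inner_cp_rot a b c, inner_cp_rot b c a]; linarith [hhb]
      exact (mul_eq_zero.mp this).resolve_right hD
    · have : t * D = 0 := by linarith [hhc]
      exact (mul_eq_zero.mp this).resolve_right hD
  have hune : u ≠ 0 := fun h => one_ne_zero (hcomb 1 0 0 (by simp [h])).1
  have hvne : v ≠ 0 := fun h => one_ne_zero (hcomb 0 1 0 (by simp [h])).2.1
  have hwne : w ≠ 0 := fun h => one_ne_zero (hcomb 0 0 1 (by simp [h])).2.2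
  have hupos : (0:ℝ) < ‖u‖⁻¹ := inv_pos.mpr (norm_pos_iff.mpr hune)
  have hvpos : (0:ℝ) < ‖v‖⁻¹ := inv_pos.mpr (norm_pos_iff.mpr hvne)
  have hwpos : (0:ℝ) < ‖w‖⁻¹ := inv_pos.mpr (norm_pos_iff.mpr hwne)
  set u' := ‖u‖⁻¹ • u with hu'def
  set v' := ‖v‖⁻¹ • v with hv'def
  set w' := ‖w‖⁻¹ • w with hw'def
  have hu' : ‖u'‖ = 1 := norm_smul_inv_norm hune
  have hv' : ‖(-v' : EuclideanSpace ℝ (Fin 3))‖ = 1 := by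
    rw [norm_neg]; exact norm_smul_inv_norm hvne
  have hw' : ‖w'‖ = 1 := norm_smul_inv_norm hwne
  have h1 : ∀ s : ℝ, u' ≠ s • (-v') := by
    intro s heq
    have hz : ‖u‖⁻¹ • u + (s * ‖v‖⁻¹) • v + (0:ℝ) • w = 0 := by
      rw [← hu'def, heq, hv'def]; module
    exact absurd (hcomb _ _ _ hz).1 (ne_of_gt hupos)
  have h2 : ∀ s t : ℝ, w' ≠ s • u' + t • (-v') := by
    intro s t heq
    have hz : (-(s * ‖u‖⁻¹)) • u + (t * ‖v‖⁻¹) • v + ‖w‖⁻¹ • w = 0 := by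
      rw [← hw'def, heq, hu'def, hv'def]; module
    exact absurd (hcomb _ _ _ hz).2.2 (ne_of_gt hwpos)
  have hstrict := strict_angle_triangle hu' hv' hw' h1 h2
  rw [angle_neg_right, angle_neg_left] at hstrict
  have e1 : angle u' w' = angle u w := by
    rw [hu'def, hw'def, angle_smul_left_of_pos _ _ hupos, angle_smul_right_of_pos _ _ hwpos]
  have e2 : angle u' v' = angle u v := by
    rw [hu'def, hv'def, angle_smul_left_of_pos _ _ hupos, angle_smul_right_of_pos _ _ hvpos]
  have e3 : angle v' w' = angle v w := by
    rw [hv'def, hw'def, angle_smul_left_of_pos _ _ hvpos, angle_smul_right_of_pos _ _ hwpos]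
  rw [e1, e2, e3] at hstrict
  have sA : sphericalAngle a b c = Real.pi - angle w v := by
    rw [sphere_angle_eq ha, ← hwdef, show cp a c = -v by rw [hvdef, cp_anticomm],
      angle_neg_right]
  have sB : sphericalAngle b c a = Real.pi - angle u w := by
    rw [sphere_angle_eq hb, ← hudef, show cp b a = -w by rw [hwdef, cp_anticomm],
      angle_neg_right]
  have sC : sphericalAngle c a b = Real.pi - angle v u := by
    rw [sphere_angle_eq hc, ← hvdef, show cp c b = -u by rw [hudef, cp_anticomm],
      angle_neg_right]
  rw [sA, sB, sC]
  have c1 : angle w v = angle v w := angle_comm w v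
  have c2 : angle v u = angle u v := angle_comm v u
  rw [c1, c2]
  linarith
end

section
/- Let α = 2πm/n with m, n coprime integers, n > 0. Then cos α is rational if and only if φ(n) ≤ 2, i.e., if and only if n ∈ {1, 2, 3, 4, 6}; in these cases cos α ∈ {0, ±1/2, ±1}. -/
open Real Polynomial in
lemma aux_hard (k n : ℕ) (hn : 0 < n) (hk : Nat.Coprime k n) (q : ℚ)
    (hq : (q : ℝ) = Real.cos (2 * π * k / n)) : Nat.totient n ≤ 2 := by
  have hζprim : IsPrimitiveRoot (Complex.exp (2 * Real.pi * Complex.I / n) ^ k) n :=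
    (Complex.isPrimitiveRoot_exp n hn.ne').pow_of_coprime k hk
  set ζ : ℂ := Complex.exp (2 * Real.pi * Complex.I / n) ^ k with hζdef
  have hnne : (n : ℂ) ≠ 0 := Nat.cast_ne_zero.mpr hn.ne'
  set θ : ℝ := 2 * π * k / n with hθ
  have hζ : ζ = Complex.exp (θ * Complex.I) := by
    rw [hζdef, ← Complex.exp_nat_mul]
    congr 1
    push_cast [hθ]
    field_simp
  have hζne : ζ ≠ 0 := by rw [hζ]; exact Complex.exp_ne_zero _
  have hsum : ζ + ζ⁻¹ = 2 * (q : ℂ) := by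
    rw [hζ, ← Complex.exp_neg, ← neg_mul, Complex.exp_mul_I, Complex.exp_mul_I]
    rw [Complex.cos_neg, Complex.sin_neg]
    have : (q : ℂ) = Complex.cos θ := by
      rw [← Complex.ofReal_cos, ← hq]; norm_cast
    rw [← this]; ring
  have hquad : ζ ^ 2 - 2 * (q : ℂ) * ζ + 1 = 0 := by
    have h2 : ζ * (ζ + ζ⁻¹) = ζ * (2 * (q : ℂ)) := by rw [hsum]
    field_simp at h2
    linear_combination h2
  set p : ℚ[X] := X ^ 2 - C (2 * q) * X + C 1 with hp
  have hmonic : p.Monic := by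
    have : p = X ^ 2 + (-(C (2 * q)) * X + C 1) := by ring
    rw [this]
    apply monic_X_pow_add
    refine lt_of_le_of_lt (?_ : _ ≤ (1 : WithBot ℕ)) (by norm_num)
    compute_degree!
  have haeval : aeval ζ p = 0 := by
    simp only [hp, map_add, map_sub, map_pow, map_mul, aeval_X, aeval_C, eq_ratCast]
    push_cast
    linear_combination hquad
  have hmin : (minpoly ℚ ζ).degree ≤ p.degree := minpoly.min ℚ ζ hmonic haeval
  have hpdeg : p.degree = 2 := by rw [hp]; compute_degree!
  have hcyc : cyclotomic n ℚ = minpoly ℚ ζ := cyclotomic_eq_minpoly_rat hζprim hn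
  have : Nat.totient n = (minpoly ℚ ζ).natDegree := by
    rw [← hcyc, natDegree_cyclotomic]
  rw [this]
  exact natDegree_le_iff_degree_le.mpr (le_trans hmin (by rw [hpdeg]; norm_num))

open Real in
lemma aux_reduce (m : ℤ) (n : ℕ) (hn : 0 < n) :
    Real.cos (2 * π * m / n) = Real.cos (2 * π * ((m % (n : ℤ)).toNat) / n) := by
  have h0 : (0 : ℤ) < n := by exact_mod_cast hn
  have hnne : (n : ℝ) ≠ 0 := Nat.cast_ne_zero.mpr hn.ne'
  have hz2 : (((m % (n : ℤ)).toNat : ℤ)) + (m / (n : ℤ)) * n = m := by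
    rw [Int.toNat_of_nonneg (Int.emod_nonneg m h0.ne')]
    have := Int.emod_add_mul_ediv m n
    linarith
  have hm : ((m % (n : ℤ)).toNat : ℝ) + ((m / (n : ℤ) : ℤ) : ℝ) * n = (m : ℝ) := by
    exact_mod_cast hz2
  rw [show 2 * π * m / n = 2 * π * ((m % (n : ℤ)).toNat) / n
      + ((m / (n : ℤ) : ℤ) : ℝ) * (2 * π) by rw [← hm]; field_simp]
  exact Real.cos_add_int_mul_two_pi _ _

lemma aux_cop (m : ℤ) (n : ℕ) (hn : 0 < n) (h : Int.gcd m (n : ℤ) = 1) :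
    Nat.Coprime (m % (n : ℤ)).toNat n := by
  have h0 : (0 : ℤ) < n := by exact_mod_cast hn
  have h1 : IsCoprime m (n : ℤ) := Int.isCoprime_iff_gcd_eq_one.mpr h
  have h2 : IsCoprime (m % (n : ℤ)) (n : ℤ) := by
    have := h1.add_mul_left_left (-(m / n))
    simpa [Int.emod_def, sub_eq_add_neg, mul_comm] using this
  have h3 : Int.gcd (m % (n : ℤ)) (n : ℤ) = 1 := Int.isCoprime_iff_gcd_eq_one.mp h2
  have h4 : (m % (n : ℤ)).natAbs = (m % (n : ℤ)).toNat := by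
    have := Int.natAbs_of_nonneg (Int.emod_nonneg m h0.ne')
    omega
  unfold Nat.Coprime
  rw [← h4]
  simpa [Int.gcd] using h3

open Real in
lemma aux_val (k n : ℕ) (hkn : k < n) (hk : Nat.Coprime k n)
    (hmem : n ∈ ({1, 2, 3, 4, 6} : Set ℕ)) :
    Real.cos (2 * π * k / n) ∈ ({0, 1/2, -(1/2), 1, -1} : Set ℝ) := by
  simp only [Set.mem_insert_iff, Set.mem_singleton_iff] at hmem ⊢
  rcases hmem with rfl | rfl | rfl | rfl | rfl
  · interval_cases k
    · right; right; right; left; norm_num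
  · interval_cases k
    · simp [Nat.Coprime] at hk
    · right; right; right; right
      rw [show 2 * π * ((1:ℕ):ℝ) / ((2:ℕ):ℝ) = π by push_cast; ring, Real.cos_pi]
  · interval_cases k
    · simp [Nat.Coprime] at hk
    · right; right; left
      rw [show 2 * π * ((1:ℕ):ℝ) / ((3:ℕ):ℝ) = π - π/3 by push_cast; ring,
        Real.cos_pi_sub, Real.cos_pi_div_three]
    · right; right; left
      rw [show 2 * π * ((2:ℕ):ℝ) / ((3:ℕ):ℝ) = 2*π - (2*π/3) by push_cast; ring,
        Real.cos_two_pi_sub,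
        show 2*π/3 = π - π/3 by ring, Real.cos_pi_sub, Real.cos_pi_div_three]
  · interval_cases k
    · simp [Nat.Coprime] at hk
    · left
      rw [show 2 * π * ((1:ℕ):ℝ) / ((4:ℕ):ℝ) = π/2 by push_cast; ring,
        Real.cos_pi_div_two]
    · simp [Nat.Coprime] at hk
    · left
      rw [show 2 * π * ((3:ℕ):ℝ) / ((4:ℕ):ℝ) = 2*π - π/2 by push_cast; ring,
        Real.cos_two_pi_sub, Real.cos_pi_div_two]
  · interval_cases k
    · simp [Nat.Coprime] at hk
    · right; left
      rw [show 2 * π * ((1:ℕ):ℝ) / ((6:ℕ):ℝ) = π/3 by push_cast; ring,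
        Real.cos_pi_div_three]
    · simp [Nat.Coprime] at hk
    · simp [Nat.Coprime] at hk
    · simp [Nat.Coprime] at hk
    · right; left
      rw [show 2 * π * ((5:ℕ):ℝ) / ((6:ℕ):ℝ) = 2*π - π/3 by push_cast; ring,
        Real.cos_two_pi_sub, Real.cos_pi_div_three]

lemma aux_tot (n : ℕ) (hn : 0 < n) (h : Nat.totient n ≤ 2) :
    n ∈ ({1, 2, 3, 4, 6} : Set ℕ) := by
  have hdvd : n ∣ 12 := by
    rw [Nat.dvd_iff_prime_pow_dvd_dvd]
    intro p k hp hpk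
    rcases Nat.eq_zero_or_pos k with rfl | hk
    · simp
    have hp' : p.Prime := hp
    have hpn : p ∣ n := dvd_trans (dvd_pow_self p hk.ne') hpk
    have hple : p ≤ 3 := by
      have h1 : Nat.totient p ∣ Nat.totient n := Nat.totient_dvd_of_dvd hpn
      have h2 : Nat.totient p ≤ Nat.totient n :=
        Nat.le_of_dvd (Nat.totient_pos.mpr hn) h1
      have h3 : Nat.totient p = p - 1 := Nat.totient_prime hp'
      have := hp'.two_le
      omega
    have h2le := hp'.two_le
    interval_cases p
    · have hk2 : k ≤ 2 := by
        by_contra hc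
        push_neg at hc
        have h8 : 2 ^ 3 ∣ n := dvd_trans (pow_dvd_pow 2 hc) hpk
        have := Nat.le_of_dvd (Nat.totient_pos.mpr hn) (Nat.totient_dvd_of_dvd h8)
        have h84 : Nat.totient (2 ^ 3) = 4 := by decide
        omega
      exact dvd_trans (pow_dvd_pow 2 hk2) (by norm_num)
    · have hk1 : k ≤ 1 := by
        by_contra hc
        push_neg at hc
        have h9 : 3 ^ 2 ∣ n := dvd_trans (pow_dvd_pow 3 hc) hpk
        have := Nat.le_of_dvd (Nat.totient_pos.mpr hn) (Nat.totient_dvd_of_dvd h9)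
        have h96 : Nat.totient (3 ^ 2) = 6 := by decide
        omega
      exact dvd_trans (pow_dvd_pow 3 hk1) (by norm_num)
  have hle : n ≤ 12 := Nat.le_of_dvd (by norm_num) hdvd
  simp only [Set.mem_insert_iff, Set.mem_singleton_iff]
  interval_cases n <;> revert h <;> decide

theorem stmt_8 (m : ℤ) (n : ℕ) (hn : 0 < n) (hcop : Int.gcd m (n : ℤ) = 1) :
    ((∃ q : ℚ, (q : ℝ) = Real.cos (2 * Real.pi * m / n)) ↔ Nat.totient n ≤ 2) ∧
    (Nat.totient n ≤ 2 ↔ n ∈ ({1, 2, 3, 4, 6} : Set ℕ)) ∧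
    (n ∈ ({1, 2, 3, 4, 6} : Set ℕ) →
      Real.cos (2 * Real.pi * m / n) ∈ ({0, 1/2, -(1/2), 1, -1} : Set ℝ)) := by
  have h0 : (0 : ℤ) < n := by exact_mod_cast hn
  set r : ℕ := (m % (n : ℤ)).toNat with hr
  have hrlt : r < n := by
    have := Int.emod_lt_of_pos m h0
    have := Int.emod_nonneg m h0.ne'
    omega
  have hrcop : Nat.Coprime r n := aux_cop m n hn hcop
  have hcos : Real.cos (2 * Real.pi * m / n) = Real.cos (2 * Real.pi * r / n) :=
    aux_reduce m n hn
  have part2 : (Nat.totient n ≤ 2 ↔ n ∈ ({1, 2, 3, 4, 6} : Set ℕ)) := by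
    constructor
    · exact aux_tot n hn
    · intro h
      simp only [Set.mem_insert_iff, Set.mem_singleton_iff] at h
      rcases h with rfl | rfl | rfl | rfl | rfl <;> decide
  have part3 : n ∈ ({1, 2, 3, 4, 6} : Set ℕ) →
      Real.cos (2 * Real.pi * m / n) ∈ ({0, 1/2, -(1/2), 1, -1} : Set ℝ) := by
    intro h
    rw [hcos]
    exact aux_val r n hrlt hrcop h
  refine ⟨⟨fun ⟨q, hq⟩ => aux_hard r n hn hrcop q (hq.trans hcos), fun h => ?_⟩, part2, part3⟩
  have h3 := part3 (part2.mp h)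
  simp only [Set.mem_insert_iff, Set.mem_singleton_iff] at h3
  rcases h3 with h3 | h3 | h3 | h3 | h3
  · exact ⟨0, by rw [h3]; norm_num⟩
  · exact ⟨1/2, by rw [h3]; norm_num⟩
  · exact ⟨-(1/2), by rw [h3]; norm_num⟩
  · exact ⟨1, by rw [h3]; norm_num⟩
  · exact ⟨-1, by rw [h3]; norm_num⟩
end

section
/- Let α = 2πm/n with m, n coprime integers, n > 0. Then cos α is an algebraic number of degree d over Q, where d = max(1, φ(n)/2); in particular for n ≥ 3, the degree of cos α over Q equals φ(n)/2. -/
set_option maxHeartbeats 1000000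
set_option synthInstance.maxHeartbeats 400000
open Polynomial IntermediateField

noncomputable def Rfield : IntermediateField ℚ ℂ :=
  Subfield.toIntermediateField (Complex.ofRealHom.fieldRange) (fun x => ⟨(x:ℝ), by simp⟩)

lemma mem_Rfield_iff (z : ℂ) : z ∈ Rfield ↔ z.im = 0 := by
  constructor
  · rintro ⟨x, rfl⟩; simp
  · intro h; exact ⟨z.re, Complex.ext (by simp) (by simp [h])⟩

lemma key (m : ℤ) (n : ℕ) (hn3 : 3 ≤ n) (hcop : Int.gcd m (n:ℤ) = 1) :
    (minpoly ℚ ((Real.cos (2 * Real.pi * m / n) : ℝ) : ℂ)).natDegree * 2 = Nat.totient n := by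
  have hn : 0 < n := by omega
  set θ : ℝ := 2 * Real.pi * m / n with hθ
  set ζ : ℂ := Complex.exp (2 * Real.pi * Complex.I / n) ^ (m : ℤ) with hζdef
  have hζ : IsPrimitiveRoot ζ n := by
    refine IsPrimitiveRoot.zpow_of_gcd_eq_one ?_ m hcop
    exact Complex.isPrimitiveRoot_exp n hn.ne'
  have hζexp : ζ = Complex.exp ((θ : ℂ) * Complex.I) := by
    rw [hζdef, ← Complex.exp_int_mul]
    congr 1
    push_cast [hθ]
    field_simp
  have hζ0 : ζ ≠ 0 := hζ.ne_zero hn.ne'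
  set c : ℝ := Real.cos θ with hcdef
  have hsum : ζ + ζ⁻¹ = 2 * ((c : ℂ)) := by
    rw [hζexp, ← Complex.exp_neg, hcdef, Complex.ofReal_cos, ← neg_mul, ← Complex.two_cos]
  have hc : ((c:ℝ) : ℂ) = (ζ + ζ⁻¹) / 2 := by rw [hsum]; ring
  have hζi : IsIntegral ℚ ζ := (hζ.isIntegral hn).tower_top
  have hζinv : IsIntegral ℚ ζ⁻¹ := hζi.inv
  have hci : IsIntegral ℚ ((c:ℝ) : ℂ) := by
    rw [hc]
    have h2 : ((2:ℂ))⁻¹ = algebraMap ℚ ℂ (2⁻¹ : ℚ) := by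
      simp
    rw [div_eq_mul_inv, h2]
    exact (hζi.add hζinv).mul isIntegral_algebraMap
  set F : IntermediateField ℚ ℂ := ℚ⟮((c:ℝ) : ℂ)⟯ with hF
  have hcF : ((c:ℝ) : ℂ) ∈ F := mem_adjoin_simple_self ℚ _
  set c' : F := ⟨((c:ℝ) : ℂ), hcF⟩ with hc'
  have hζF : IsIntegral F ζ := hζi.tower_top
  -- the quadratic
  set q : F[X] := C 1 * X ^ 2 + C (-(2 * c')) * X + C 1 with hq
  have hqdeg : q.natDegree = 2 := natDegree_quadratic one_ne_zero
  have hq0 : q ≠ 0 := fun h => by simp [h] at hqdeg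
  have haeval : Polynomial.aeval ζ q = 0 := by
    have halg : (algebraMap F ℂ) c' = ((c:ℝ) : ℂ) := rfl
    simp only [hq, map_add, map_mul, map_pow, aeval_X, aeval_C, halg, map_one, map_neg]
    rw [hc]
    have h2 : ((2 : F) : ℂ) = 2 := rfl
    field_simp
    push_cast [h2]
    simp only [map_ofNat]
    ring
  have hdvd : minpoly F ζ ∣ q := minpoly.dvd F ζ haeval
  have hle : (minpoly F ζ).natDegree ≤ 2 := hqdeg ▸ natDegree_le_of_dvd hdvd hq0
  have hpos : 0 < (minpoly F ζ).natDegree := minpoly.natDegree_pos hζF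
  have hne1 : (minpoly F ζ).natDegree ≠ 1 := by
    intro h1
    have hdeg1 : (minpoly F ζ).degree = 1 := by
      rw [degree_eq_natDegree (minpoly.ne_zero hζF), h1]; rfl
    obtain ⟨y, hy⟩ := (minpoly.degree_eq_one_iff).mp hdeg1
    have hζmem : ζ ∈ F := hy ▸ y.2
    have hFR : F ≤ Rfield := by
      rw [hF]
      apply adjoin_le_iff.mpr
      intro x hx
      rw [Set.mem_singleton_iff] at hx
      subst hx
      exact (mem_Rfield_iff _).mpr (by simp)
    have him : ζ.im = 0 := (mem_Rfield_iff _).mp (hFR hζmem)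
    rw [hζexp, Complex.exp_ofReal_mul_I_im] at him
    rw [Real.sin_eq_zero_iff] at him
    obtain ⟨k, hk⟩ := him
    -- k * π = 2π m / n
    have hπ : (Real.pi : ℝ) ≠ 0 := Real.pi_ne_zero
    have hnR : (n : ℝ) ≠ 0 := by exact_mod_cast hn.ne'
    have hkn : (k : ℝ) * n = 2 * m := by
      rw [hθ] at hk
      field_simp at hk
      nlinarith [hk, Real.pi_pos]
    have hknZ : k * (n:ℤ) = 2 * m := by exact_mod_cast hkn
    have hdvd2 : (n : ℤ) ∣ 2 * m := ⟨k, by linarith [hknZ]⟩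
    have hcopnm : IsCoprime (n : ℤ) m := (Int.isCoprime_iff_gcd_eq_one.mpr hcop).symm
    have hdvd2' : (n : ℤ) ∣ 2 := (hcopnm.dvd_of_dvd_mul_right) hdvd2
    have : n ∣ 2 := by exact_mod_cast hdvd2'
    have := Nat.le_of_dvd (by norm_num) this
    omega
  have h2deg : (minpoly F ζ).natDegree = 2 := by omega
  -- tower
  have hd : Module.finrank ℚ F = (minpoly ℚ ((c:ℝ):ℂ)).natDegree := adjoin.finrank hci
  have hE : Module.finrank F F⟮ζ⟯ = 2 := by rw [adjoin.finrank hζF, h2deg]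
  have htot : Module.finrank ℚ ℚ⟮ζ⟯ = Nat.totient n := by
    rw [adjoin.finrank hζi, ← cyclotomic_eq_minpoly_rat hζ hn, natDegree_cyclotomic]
  have hEq : (F⟮ζ⟯).restrictScalars ℚ = ℚ⟮ζ⟯ := by
    rw [hF]
    refine (adjoin_adjoin_left (F := ℚ) (S := {((c:ℝ):ℂ)}) {ζ}).trans ?_
    apply le_antisymm
    · apply adjoin_le_iff.mpr
      intro x hx
      rcases hx with hx | hx
      · rw [Set.mem_singleton_iff] at hx
        subst hx
        rw [hc]
        exact div_mem (add_mem (mem_adjoin_simple_self ℚ ζ)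
          (inv_mem (mem_adjoin_simple_self ℚ ζ))) (by exact_mod_cast IntermediateField.natCast_mem ℚ⟮ζ⟯ 2 : (2:ℂ) ∈ ℚ⟮ζ⟯)
      · rw [Set.mem_singleton_iff] at hx
        subst hx
        exact subset_adjoin ℚ {ζ} rfl
    · exact adjoin.mono _ _ _ (Set.subset_union_right)
  have htower : Module.finrank ℚ F * Module.finrank F F⟮ζ⟯ = Module.finrank ℚ F⟮ζ⟯ :=
    Module.finrank_mul_finrank ℚ F F⟮ζ⟯
  have hfin2 : Module.finrank ℚ ((F)⟮ζ⟯) = n.totient := by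
    rw [← htot, ← hEq]
    rfl
  rw [← hd, ← hE, htower]
  exact hfin2

theorem stmt_9 (m : ℤ) (n : ℕ) (hn : 0 < n) (hcop : Int.gcd m (n : ℤ) = 1) :
    (minpoly ℚ (Real.cos (2 * Real.pi * m / n))).natDegree = max 1 (Nat.totient n / 2) ∧
    (3 ≤ n → (minpoly ℚ (Real.cos (2 * Real.pi * m / n))).natDegree = Nat.totient n / 2) := by
  by_cases h3 : 3 ≤ n
  · have hbridge : (minpoly ℚ (Real.cos (2 * Real.pi * m / n))).natDegree
        = (minpoly ℚ ((Real.cos (2 * Real.pi * m / n) : ℝ) : ℂ)).natDegree := by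
      rw [show ((Real.cos (2 * Real.pi * m / n) : ℝ) : ℂ)
          = algebraMap ℝ ℂ (Real.cos (2 * Real.pi * m / n)) from rfl,
        minpoly.algebraMap_eq Complex.ofReal_injective]
    have hk := key m n h3 hcop
    rw [← hbridge] at hk
    have htpos : 0 < Nat.totient n := Nat.totient_pos.mpr hn
    constructor
    · omega
    · intro _; omega
  · interval_cases n
    · -- n = 1
      have hval : Real.cos (2 * Real.pi * m / (1:ℕ)) = 1 := by
        have : (2 : ℝ) * Real.pi * m / (1:ℕ) = (m : ℝ) * (2 * Real.pi) := by
          push_cast; ring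
        rw [this, Real.cos_int_mul_two_pi]
      rw [hval, show (1:ℝ) = algebraMap ℚ ℝ 1 from by norm_num,
        minpoly.eq_X_sub_C, Polynomial.natDegree_X_sub_C]
      refine ⟨by simp, by omega⟩
    · -- n = 2
      have hodd : Odd m := by
        rw [← Int.not_even_iff_odd]
        intro heven
        obtain ⟨k, hk⟩ := heven
        have h2m : (2:ℤ) ∣ m := ⟨k, by omega⟩
        have h2 := Int.dvd_gcd h2m (dvd_refl (2:ℤ))
        rw [show ((2:ℕ):ℤ) = (2:ℤ) from rfl] at hcop
        rw [hcop] at h2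
        norm_num at h2
      have hval : Real.cos (2 * Real.pi * m / (2:ℕ)) = -1 := by
        have harg : (2 : ℝ) * Real.pi * m / (2:ℕ) = (m : ℝ) * Real.pi - 0 := by
          push_cast; ring
        rw [harg, Real.cos_int_mul_pi_sub, Real.cos_zero, mul_one, Odd.neg_one_zpow hodd]
      rw [hval, show (-1:ℝ) = algebraMap ℚ ℝ (-1) from by norm_num,
        minpoly.eq_X_sub_C, Polynomial.natDegree_X_sub_C]
      refine ⟨by decide, by omega⟩
end

section
/- If α is a rational multiple of π and cos α is a quadratic irrational (algebraic of degree exactly 2 over Q), then cos α ∈ {±(√5-1)/4, ±√2/2, ±(√5+1)/4, ±√3/2}. -/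
open Polynomial Complex

set_option synthInstance.maxSize 2000 in
lemma tot_aux : ∀ n, n < 121 → n.totient ≤ 4 → n ∣ 120 →
    n = 1 ∨ n = 2 ∨ n = 3 ∨ n = 4 ∨ n = 5 ∨ n = 6 ∨ n = 8 ∨ n = 10 ∨ n = 12 := by decide

lemma totient_le_four (n : ℕ) (hn : 0 < n) (h : n.totient ≤ 4) :
    n = 1 ∨ n = 2 ∨ n = 3 ∨ n = 4 ∨ n = 5 ∨ n = 6 ∨ n = 8 ∨ n = 10 ∨ n = 12 := by
  have hdvd : n ∣ 120 := by
    rw [Nat.dvd_iff_prime_pow_dvd_dvd]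
    intro p k pp hpk
    rcases Nat.eq_zero_or_pos k with rfl | hk1
    · simpa using one_dvd _
    have h2 : (p ^ k).totient ≤ 4 :=
      le_trans (Nat.le_of_dvd (Nat.totient_pos.2 hn) (Nat.totient_dvd_of_dvd hpk)) h
    rw [Nat.totient_prime_pow pp hk1] at h2
    have h3 : 1 ≤ p ^ (k - 1) := Nat.one_le_pow _ _ pp.pos
    have h4 : p - 1 ≤ p ^ (k - 1) * (p - 1) := Nat.le_mul_of_pos_left _ (by omega)
    have h2le := pp.two_le
    have hple : p ≤ 5 := by omega
    interval_cases p
    · have hk3 : k ≤ 3 := by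
        by_contra hgt
        have : 2 ^ 3 ≤ 2 ^ (k - 1) := Nat.pow_le_pow_right (by norm_num) (by omega)
        omega
      interval_cases k <;> norm_num
    · have hk3 : k ≤ 1 := by
        by_contra hgt
        have : 3 ^ 1 ≤ 3 ^ (k - 1) := Nat.pow_le_pow_right (by norm_num) (by omega)
        omega
      interval_cases k <;> norm_num
    · exact absurd pp (by norm_num)
    · have hk3 : k ≤ 1 := by
        by_contra hgt
        have : 5 ^ 1 ≤ 5 ^ (k - 1) := Nat.pow_le_pow_right (by norm_num) (by omega)
        omega
      interval_cases k <;> norm_num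
  exact tot_aux n (by have := Nat.le_of_dvd (by norm_num) hdvd; omega) h hdvd

lemma rat_contra {c : ℝ} (q : ℚ) (hc : c = (q : ℝ))
    (hdeg : (minpoly ℚ c).natDegree = 2) : False := by
  rw [hc, show ((q : ℝ)) = algebraMap ℚ ℝ q from rfl, minpoly.eq_X_sub_C] at hdeg
  simp at hdeg

lemma sqcases {x s : ℝ} (hs : 0 ≤ s) (h : x ^ 2 = s) :
    x = Real.sqrt s ∨ x = -Real.sqrt s := by
  have h2 : x ^ 2 = Real.sqrt s ^ 2 := by rw [Real.sq_sqrt hs]; exact h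
  exact sq_eq_sq_iff_eq_or_eq_neg.mp h2

theorem stmt_11 (α : ℝ) (r : ℚ) (hα : α = (r : ℝ) * Real.pi)
    (hdeg : (minpoly ℚ (Real.cos α)).natDegree = 2) :
    Real.cos α ∈ ({(Real.sqrt 5 - 1) / 4, -((Real.sqrt 5 - 1) / 4),
      Real.sqrt 2 / 2, -(Real.sqrt 2 / 2),
      (Real.sqrt 5 + 1) / 4, -((Real.sqrt 5 + 1) / 4),
      Real.sqrt 3 / 2, -(Real.sqrt 3 / 2)} : Set ℝ) := by
  set c := Real.cos α with hc
  -- integrality and the quadratic equation for c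
  have hint : IsIntegral ℚ c := by
    by_contra hni
    rw [minpoly.eq_zero hni] at hdeg
    simp at hdeg
  have hmon : (minpoly ℚ c).Monic := minpoly.monic hint
  set a : ℚ := (minpoly ℚ c).coeff 1 with ha
  set b : ℚ := (minpoly ℚ c).coeff 0 with hb
  have hcoef2 : (minpoly ℚ c).coeff 2 = 1 := by
    have := hmon.coeff_natDegree
    rwa [hdeg] at this
  have hreal : c ^ 2 + (a : ℝ) * c + (b : ℝ) = 0 := by
    have haev := minpoly.aeval ℚ c
    rw [Polynomial.aeval_eq_sum_range, hdeg] at haev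
    simp [Finset.sum_range_succ, hcoef2, Rat.smul_def] at haev
    linarith [haev]
  -- the root of unity z
  set z : ℂ := Complex.exp (α * Complex.I) with hz
  have hz0 : z ≠ 0 := Complex.exp_ne_zero _
  have h1 : z * (starRingEnd ℂ) z = 1 := by
    rw [hz, ← Complex.exp_conj]
    rw [show (starRingEnd ℂ) ((α : ℂ) * Complex.I) = -((α : ℂ) * Complex.I) by
      simp [Complex.conj_I]]
    rw [← Complex.exp_add]
    simp
  have h2 : z + (starRingEnd ℂ) z = 2 * (c : ℝ) := by
    rw [Complex.add_conj]
    norm_num [hz, Complex.exp_ofReal_mul_I_re, hc]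
  have g1 : 2 * (c : ℂ) * z = z ^ 2 + 1 := by
    linear_combination (-z) * h2 + h1
  -- z is a root of unity
  have hro : z ^ (2 * r.den) = 1 := by
    rw [hz, ← Complex.exp_nat_mul]
    refine Complex.exp_eq_one_iff.mpr ⟨r.num, ?_⟩
    have hd : ((r.den : ℝ)) * (r : ℝ) = (r.num : ℝ) := by
      exact_mod_cast congrArg (fun q : ℚ => (q : ℝ)) (Rat.den_mul_eq_num r)
    have hdc : (r.den : ℂ) * (r : ℂ) = (r.num : ℂ) := by exact_mod_cast hd
    rw [hα]
    push_cast
    linear_combination (2 * (Real.pi : ℂ) * Complex.I) * hdc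
  have hfin : IsOfFinOrder z :=
    isOfFinOrder_iff_pow_eq_one.mpr ⟨2 * r.den, by positivity, hro⟩
  have hnpos : 0 < orderOf z := hfin.orderOf_pos
  have hprim : IsPrimitiveRoot z (orderOf z) := IsPrimitiveRoot.orderOf z
  have hzn : z ^ orderOf z = 1 := pow_orderOf_eq_one z
  -- complex version of the quadratic equation
  have hcc : (c : ℂ) ^ 2 + (a : ℂ) * (c : ℂ) + (b : ℂ) = 0 := by
    exact_mod_cast congrArg (fun x : ℝ => (x : ℂ)) hreal
  -- the quartic polynomial killing z
  set P : ℚ[X] := X ^ 4 + C (2 * a) * X ^ 3 + C (2 + 4 * b) * X ^ 2 + C (2 * a) * X + C 1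
    with hP
  have hPm : P.Monic := by
    rw [hP]; monicity!
  have hP0 : P ≠ 0 := hPm.ne_zero
  have hPdeg : P.natDegree ≤ 4 := by
    rw [hP]; compute_degree
  have hPz : Polynomial.aeval z P = 0 := by
    simp only [hP, map_add, map_mul, map_pow, Polynomial.aeval_X, Polynomial.aeval_C, eq_ratCast]
    push_cast
    linear_combination (-(z ^ 2 + 2 * (c : ℂ) * z + 2 * (a : ℂ) * z + 1)) * g1 +
      (4 * z ^ 2) * hcc
  have htot : (orderOf z).totient ≤ 4 := by
    have hd : minpoly ℚ z ∣ P := minpoly.dvd ℚ z hPz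
    have h4 : (minpoly ℚ z).natDegree ≤ 4 :=
      le_trans (Polynomial.natDegree_le_of_dvd hd hP0) hPdeg
    rw [← Polynomial.cyclotomic_eq_minpoly_rat hprim hnpos] at h4
    rwa [Polynomial.natDegree_cyclotomic] at h4
  have hcases := totient_le_four (orderOf z) hnpos htot
  -- helper : z^m = 1 → orderOf z ∣ m
  have hdvdord : ∀ m : ℕ, z ^ m = 1 → orderOf z ∣ m := fun m h => orderOf_dvd_of_pow_eq_one h

  have memgoal : ∀ x : ℝ, (x = (Real.sqrt 5 - 1) / 4 ∨ x = -((Real.sqrt 5 - 1) / 4) ∨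
      x = Real.sqrt 2 / 2 ∨ x = -(Real.sqrt 2 / 2) ∨ x = (Real.sqrt 5 + 1) / 4 ∨
      x = -((Real.sqrt 5 + 1) / 4) ∨ x = Real.sqrt 3 / 2 ∨ x = -(Real.sqrt 3 / 2)) →
      x ∈ ({(Real.sqrt 5 - 1) / 4, -((Real.sqrt 5 - 1) / 4),
      Real.sqrt 2 / 2, -(Real.sqrt 2 / 2),
      (Real.sqrt 5 + 1) / 4, -((Real.sqrt 5 + 1) / 4),
      Real.sqrt 3 / 2, -(Real.sqrt 3 / 2)} : Set ℝ) := by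
    intro x hx
    simpa only [Set.mem_insert_iff, Set.mem_singleton_iff] using hx
  rcases hcases with h|h|h|h|h|h|h|h|h <;> rw [h] at hzn
  · -- n = 1
    have hz1 : z = 1 := by simpa using hzn
    rw [hz1] at g1
    have hc1 : (c : ℂ) = 1 := by linear_combination g1 / 2
    exact (rat_contra 1 (by exact_mod_cast hc1) hdeg).elim
  · -- n = 2
    have hne1 : z ≠ 1 := fun hm => by
      have := hdvdord 1 (by simpa using hm); rw [h] at this; norm_num at this
    have hf : (z - 1) * (z + 1) = 0 := by linear_combination hzn
    have hzm : z = -1 := by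
      rcases mul_eq_zero.mp hf with h'|h'
      · exact absurd (sub_eq_zero.mp h') hne1
      · exact eq_neg_of_add_eq_zero_left h'
    rw [hzm] at g1
    have hc1 : (c : ℂ) = -1 := by linear_combination (-1/2) * g1
    exact (rat_contra (-1) (by exact_mod_cast hc1) hdeg).elim
  · -- n = 3
    have hne1 : z ≠ 1 := fun hm => by
      have := hdvdord 1 (by simpa using hm); rw [h] at this; norm_num at this
    have hf : (z - 1) * (z ^ 2 + z + 1) = 0 := by linear_combination hzn
    have q : z ^ 2 + z + 1 = 0 := (mul_eq_zero.mp hf).resolve_left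
      (sub_ne_zero.mpr hne1)
    have key : ((2 * c + 1 : ℝ) : ℂ) * z = 0 := by push_cast; linear_combination g1 + q
    have hre : (2 * c + 1 : ℝ) = 0 := by
      exact_mod_cast (mul_eq_zero.mp key).resolve_right hz0
    exact (rat_contra (-1/2) (by push_cast; linarith) hdeg).elim
  · -- n = 4
    have hne2 : z ^ 2 ≠ 1 := fun hm => by
      have := hdvdord 2 hm; rw [h] at this; norm_num at this
    have hf : (z ^ 2 - 1) * (z ^ 2 + 1) = 0 := by linear_combination hzn
    have q : z ^ 2 + 1 = 0 := (mul_eq_zero.mp hf).resolve_left (sub_ne_zero.mpr hne2)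
    have key : ((2 * c : ℝ) : ℂ) * z = 0 := by push_cast; linear_combination g1 + q
    have hre : (2 * c : ℝ) = 0 := by
      exact_mod_cast (mul_eq_zero.mp key).resolve_right hz0
    exact (rat_contra 0 (by push_cast; linarith) hdeg).elim
  · -- n = 5
    have hne1 : z ≠ 1 := fun hm => by
      have := hdvdord 1 (by simpa using hm); rw [h] at this; norm_num at this
    have hf : (z - 1) * (z ^ 4 + z ^ 3 + z ^ 2 + z + 1) = 0 := by linear_combination hzn
    have q : z ^ 4 + z ^ 3 + z ^ 2 + z + 1 = 0 :=
      (mul_eq_zero.mp hf).resolve_left (sub_ne_zero.mpr hne1)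
    have key : z ^ 2 * ((4 * c ^ 2 + 2 * c - 1 : ℝ) : ℂ) = 0 := by
      push_cast
      linear_combination (2 * (c : ℂ) * z + z ^ 2 + 1 + z) * g1 + q
    have hre : (4 * c ^ 2 + 2 * c - 1 : ℝ) = 0 := by
      exact_mod_cast (mul_eq_zero.mp key).resolve_left (pow_ne_zero 2 hz0)
    have hsq : (4 * c + 1) ^ 2 = 5 := by linear_combination 4 * hre
    rcases sqcases (by norm_num) hsq with h'|h'
    · exact memgoal c (Or.inl (by linarith))
    · exact memgoal c (Or.inr (Or.inr (Or.inr (Or.inr (Or.inr (Or.inl (by linarith)))))))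
  · -- n = 6
    have hne2 : z ^ 2 ≠ 1 := fun hm => by
      have := hdvdord 2 hm; rw [h] at this; norm_num at this
    have hne3 : z ^ 3 ≠ 1 := fun hm => by
      have := hdvdord 3 hm; rw [h] at this; norm_num at this
    have hcub : (z ^ 3 - 1) * (z ^ 3 + 1) = 0 := by linear_combination hzn
    have p3 : z ^ 3 + 1 = 0 := (mul_eq_zero.mp hcub).resolve_left (sub_ne_zero.mpr hne3)
    have hf : (z + 1) * (z ^ 2 - z + 1) = 0 := by linear_combination p3
    have hzne : z + 1 ≠ 0 := fun hm => by
      have : z = -1 := eq_neg_of_add_eq_zero_left hm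
      exact hne2 (by rw [this]; norm_num)
    have q : z ^ 2 - z + 1 = 0 := (mul_eq_zero.mp hf).resolve_left hzne
    have key : ((2 * c - 1 : ℝ) : ℂ) * z = 0 := by push_cast; linear_combination g1 + q
    have hre : (2 * c - 1 : ℝ) = 0 := by
      exact_mod_cast (mul_eq_zero.mp key).resolve_right hz0
    exact (rat_contra (1/2) (by push_cast; linarith) hdeg).elim
  · -- n = 8
    have hne4 : z ^ 4 ≠ 1 := fun hm => by
      have := hdvdord 4 hm; rw [h] at this; norm_num at this
    have hf : (z ^ 4 - 1) * (z ^ 4 + 1) = 0 := by linear_combination hzn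
    have p4 : z ^ 4 + 1 = 0 := (mul_eq_zero.mp hf).resolve_left (sub_ne_zero.mpr hne4)
    have key : z ^ 2 * ((4 * c ^ 2 - 2 : ℝ) : ℂ) = 0 := by
      push_cast
      linear_combination (2 * (c : ℂ) * z + z ^ 2 + 1) * g1 + p4
    have hre : (4 * c ^ 2 - 2 : ℝ) = 0 := by
      exact_mod_cast (mul_eq_zero.mp key).resolve_left (pow_ne_zero 2 hz0)
    have hsq : (2 * c) ^ 2 = 2 := by linear_combination hre
    rcases sqcases (by norm_num) hsq with h'|h'
    · exact memgoal c (Or.inr (Or.inr (Or.inl (by linarith))))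
    · exact memgoal c (Or.inr (Or.inr (Or.inr (Or.inl (by linarith)))))
  · -- n = 10
    have hne2 : z ^ 2 ≠ 1 := fun hm => by
      have := hdvdord 2 hm; rw [h] at this; norm_num at this
    have hne5 : z ^ 5 ≠ 1 := fun hm => by
      have := hdvdord 5 hm; rw [h] at this; norm_num at this
    have hq5 : (z ^ 5 - 1) * (z ^ 5 + 1) = 0 := by linear_combination hzn
    have p5 : z ^ 5 + 1 = 0 := (mul_eq_zero.mp hq5).resolve_left (sub_ne_zero.mpr hne5)
    have hf : (z + 1) * (z ^ 4 - z ^ 3 + z ^ 2 - z + 1) = 0 := by linear_combination p5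
    have hzne : z + 1 ≠ 0 := fun hm => by
      have : z = -1 := eq_neg_of_add_eq_zero_left hm
      exact hne2 (by rw [this]; norm_num)
    have q : z ^ 4 - z ^ 3 + z ^ 2 - z + 1 = 0 := (mul_eq_zero.mp hf).resolve_left hzne
    have key : z ^ 2 * ((4 * c ^ 2 - 2 * c - 1 : ℝ) : ℂ) = 0 := by
      push_cast
      linear_combination (2 * (c : ℂ) * z + z ^ 2 + 1 - z) * g1 + q
    have hre : (4 * c ^ 2 - 2 * c - 1 : ℝ) = 0 := by
      exact_mod_cast (mul_eq_zero.mp key).resolve_left (pow_ne_zero 2 hz0)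
    have hsq : (4 * c - 1) ^ 2 = 5 := by linear_combination 4 * hre
    rcases sqcases (by norm_num) hsq with h'|h'
    · exact memgoal c (Or.inr (Or.inr (Or.inr (Or.inr (Or.inl (by linarith))))))
    · exact memgoal c (Or.inr (Or.inl (by linarith)))
  · -- n = 12
    have hne4 : z ^ 4 ≠ 1 := fun hm => by
      have := hdvdord 4 hm; rw [h] at this; norm_num at this
    have hne6 : z ^ 6 ≠ 1 := fun hm => by
      have := hdvdord 6 hm; rw [h] at this; norm_num at this
    have hq6 : (z ^ 6 - 1) * (z ^ 6 + 1) = 0 := by linear_combination hzn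
    have p6 : z ^ 6 + 1 = 0 := (mul_eq_zero.mp hq6).resolve_left (sub_ne_zero.mpr hne6)
    have hf : (z ^ 2 + 1) * (z ^ 4 - z ^ 2 + 1) = 0 := by linear_combination p6
    have hzne : z ^ 2 + 1 ≠ 0 := fun hm => by
      have h2' : z ^ 2 = -1 := eq_neg_of_add_eq_zero_left hm
      exact hne4 (by rw [show z ^ 4 = (z ^ 2) ^ 2 by ring, h2']; norm_num)
    have q : z ^ 4 - z ^ 2 + 1 = 0 := (mul_eq_zero.mp hf).resolve_left hzne
    have key : z ^ 2 * ((4 * c ^ 2 - 3 : ℝ) : ℂ) = 0 := by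
      push_cast
      linear_combination (2 * (c : ℂ) * z + z ^ 2 + 1) * g1 + q
    have hre : (4 * c ^ 2 - 3 : ℝ) = 0 := by
      exact_mod_cast (mul_eq_zero.mp key).resolve_left (pow_ne_zero 2 hz0)
    have hsq : (2 * c) ^ 2 = 3 := by linear_combination hre
    rcases sqcases (by norm_num) hsq with h'|h'
    · exact memgoal c (Or.inr (Or.inr (Or.inr (Or.inr (Or.inr (Or.inr (Or.inl (by linarith))))))))
    · exact memgoal c (Or.inr (Or.inr (Or.inr (Or.inr (Or.inr (Or.inr (Or.inr (by linarith))))))))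
end

section
/- The golden-ratio-related number φ - 1 = (√5 - 1)/2, a root of x^4 - 3x^2 + 1 = 0 lying in (-1,1), is not equal to cos(rπ) for any rational number r. -/
open Real

def fseq : ℕ → ℤ × ℤ
  | 0 => (-1, 1)
  | (k+1) => ((fseq k).1 ^ 2 + 5 * (fseq k).2 ^ 2 - 2, 2 * (fseq k).1 * (fseq k).2)

lemma fseq_prop : ∀ k, (2:ℤ)^k ≤ |(fseq k).2| ∧ 1 ≤ |(fseq k).1| := by
  intro k
  induction k with
  | zero => simp [fseq]
  | succ k ih =>
    obtain ⟨hb, ha⟩ := ih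
    have h2 : (1:ℤ) ≤ (2:ℤ)^k := one_le_pow₀ (by norm_num)
    constructor
    · show (2:ℤ)^(k+1) ≤ |2 * (fseq k).1 * (fseq k).2|
      rw [abs_mul, abs_mul, abs_two, pow_succ]
      nlinarith [abs_nonneg (fseq k).1, abs_nonneg (fseq k).2]
    · show 1 ≤ |(fseq k).1 ^ 2 + 5 * (fseq k).2 ^ 2 - 2|
      have h3 : (1:ℤ) ≤ (fseq k).1 ^ 2 := by nlinarith [sq_abs (fseq k).1]
      have h4 : (1:ℤ) ≤ (fseq k).2 ^ 2 := by nlinarith [sq_abs (fseq k).2]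
      have : (1:ℤ) ≤ (fseq k).1 ^ 2 + 5 * (fseq k).2 ^ 2 - 2 := by linarith
      calc (1:ℤ) ≤ _ := this
        _ ≤ _ := le_abs_self _

lemma fseq_mono : StrictMono (fun k => |(fseq k).2|) := by
  apply strictMono_nat_of_lt_succ
  intro k
  obtain ⟨hb, ha⟩ := fseq_prop k
  have h2 : (1:ℤ) ≤ (2:ℤ)^k := one_le_pow₀ (by norm_num)
  show |(fseq k).2| < |2 * (fseq k).1 * (fseq k).2|
  rw [abs_mul, abs_mul, abs_two]
  nlinarith [abs_nonneg (fseq k).1, abs_nonneg (fseq k).2]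

lemma sqrt5_irr : Irrational (Real.sqrt 5) := by
  simpa using (Nat.Prime.irrational_sqrt (by norm_num : Nat.Prime 5))

lemma key_s12 (r : ℚ) (h : Real.cos ((r : ℝ) * Real.pi) = (Real.sqrt 5 - 1) / 2) : False := by
  set q : ℕ := r.den with hqdef
  have hq : 0 < q := r.pos
  -- y_k relation
  have hcos : ∀ k : ℕ, 2 * Real.cos ((2:ℝ)^k * (r:ℝ) * Real.pi)
      = ((fseq k).1 : ℝ) + ((fseq k).2 : ℝ) * Real.sqrt 5 := by
    intro k
    induction k with
    | zero => simp [fseq, h]; ring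
    | succ k ih =>
      have h2 : (2:ℝ)^(k+1) * (r:ℝ) * Real.pi = 2 * ((2:ℝ)^k * (r:ℝ) * Real.pi) := by ring
      rw [h2, Real.cos_two_mul]
      have h5 : Real.sqrt 5 ^ 2 = 5 := Real.sq_sqrt (by norm_num)
      show 2 * (2 * Real.cos ((2:ℝ)^k * (r:ℝ) * Real.pi) ^ 2 - 1)
          = (((fseq k).1 ^ 2 + 5 * (fseq k).2 ^ 2 - 2 : ℤ) : ℝ) + ((2 * (fseq k).1 * (fseq k).2 : ℤ) : ℝ) * Real.sqrt 5
      push_cast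
      linear_combination (2 * Real.cos ((2:ℝ)^k * (r:ℝ) * Real.pi) + ((fseq k).1:ℝ) + ((fseq k).2:ℝ) * Real.sqrt 5) * ih + ((fseq k).2:ℝ)^2 * h5
  -- membership in finite set
  have hmem : ∀ k : ℕ, Real.cos ((2:ℝ)^k * (r:ℝ) * Real.pi) ∈
      (Finset.range (2*q)).image (fun j : ℕ => Real.cos ((j : ℝ) * Real.pi / q)) := by
    intro k
    set N : ℤ := 2^k * r.num with hN
    set j : ℤ := N % (2*q) with hj
    set m : ℤ := N / (2*q) with hm
    have hqz : (0:ℤ) < 2*q := by positivity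
    have hj0 : 0 ≤ j := Int.emod_nonneg N (by positivity)
    have hjlt : j < 2*q := Int.emod_lt_of_pos N hqz
    have he : N = 2*q*m + j := (Int.mul_ediv_add_emod N (2*q)).symm
    rw [hN] at he
    have hr : (r : ℝ) = (r.num : ℝ) / (q : ℝ) := by rw [Rat.cast_def, hqdef]
    have harg : (2:ℝ)^k * (r:ℝ) * Real.pi = (j : ℝ) * Real.pi / q + (m : ℝ) * (2 * Real.pi) := by
      have heR : ((2:ℝ)^k * r.num) = 2*(q:ℝ)*m + j := by exact_mod_cast he
      rw [hr]
      field_simp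
      nlinarith [heR, Real.pi_pos]
    rw [harg]
    rw [Real.cos_add_int_mul_two_pi]
    simp only [Finset.mem_image, Finset.mem_range]
    refine ⟨j.toNat, ?_, ?_⟩
    · omega
    · have hcast : ((j.toNat : ℕ) : ℝ) = (j:ℝ) := by exact_mod_cast Int.toNat_of_nonneg hj0
      rw [hcast]
  -- pigeonhole
  have hinj : Function.Injective (fun k : ℕ => Real.cos ((2:ℝ)^k * (r:ℝ) * Real.pi)) := by
    intro k l hkl
    simp only at hkl
    have this := hcos k
    rw [hkl, hcos l] at this
    have hb : (fseq k).2 = (fseq l).2 := by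
      by_contra hne
      have : Real.sqrt 5 = (((fseq k).1 - (fseq l).1 : ℤ) : ℝ) / (((fseq l).2 - (fseq k).2 : ℤ) : ℝ) := by
        have hne' : (((fseq l).2 - (fseq k).2 : ℤ) : ℝ) ≠ 0 := by
          simp only [ne_eq, Int.cast_eq_zero, sub_eq_zero]
          exact fun hh => hne (hh.symm)
        rw [eq_div_iff hne']
        push_cast at this ⊢
        linear_combination this
      exact sqrt5_irr ⟨(((fseq k).1 - (fseq l).1 : ℤ) : ℚ) / (((fseq l).2 - (fseq k).2 : ℤ) : ℚ), by
        push_cast [this]; norm_num⟩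
    exact fseq_mono.injective (by rw [hb])
  have hcard := Finset.card_le_card_of_injOn (s := Finset.range (2*q+1))
    (fun k : ℕ => Real.cos ((2:ℝ)^k * (r:ℝ) * Real.pi))
    (fun k _ => hmem k) (hinj.injOn)
  rw [Finset.card_range (2*q+1)] at hcard
  have hle := Finset.card_image_le (s := Finset.range (2*q)) (f := fun j : ℕ => Real.cos ((j : ℝ) * Real.pi / q))
  rw [Finset.card_range] at hle
  have : 2*q+1 ≤ 2*q := le_trans hcard hle
  omega

theorem stmt_12 :
    ((Real.sqrt 5 - 1) / 2) ^ 4 - 3 * ((Real.sqrt 5 - 1) / 2) ^ 2 + 1 = 0 ∧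
    (Real.sqrt 5 - 1) / 2 ∈ Set.Ioo (-1 : ℝ) 1 ∧
    ∀ r : ℚ, Real.cos ((r : ℝ) * Real.pi) ≠ (Real.sqrt 5 - 1) / 2 ∧
      Real.cos ((r : ℝ) * Real.pi) ≠ (1 - Real.sqrt 5) / 2 := by
  have h5 : Real.sqrt 5 ^ 2 = 5 := Real.sq_sqrt (by norm_num)
  have h0 : 0 ≤ Real.sqrt 5 := Real.sqrt_nonneg 5
  refine ⟨?_, ⟨?_, ?_⟩, ?_⟩
  · linear_combination ((Real.sqrt 5)^2/16 - Real.sqrt 5/4 - 1/16) * h5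
  · nlinarith
  · nlinarith
  · intro r
    refine ⟨fun h => key_s12 r h, fun h => key_s12 (r+1) ?_⟩
    have : ((r + 1 : ℚ) : ℝ) * Real.pi = (r : ℝ) * Real.pi + Real.pi := by push_cast; ring
    rw [this, Real.cos_add_pi, h]
    ring
end

section
/- For real numbers s, t, the vector (-φs + t/φ - 1) is an eigenvalue of the 4×4 matrix A = [[-1,t,s,s],[t,-1,t,s],[s,t,-1,t],[s,s,t,-1]], where φ = (1+√5)/2. -/
theorem stmt_14 (s t : ℝ) (φ : ℝ) (hφ : φ = (1 + Real.sqrt 5) / 2) :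
    ∃ v : Fin 4 → ℝ, v ≠ 0 ∧
      (!![-1, t, s, s; t, -1, t, s; s, t, -1, t; s, s, t, -1] : Matrix (Fin 4) (Fin 4) ℝ).mulVec v
        = (-φ * s + t / φ - 1) • v := by
  have h5 : Real.sqrt 5 ^ 2 = 5 := Real.sq_sqrt (by norm_num)
  have hpos : (0:ℝ) < φ := by
    rw [hφ]; positivity
  have hne : φ ≠ 0 := ne_of_gt hpos
  have hsq : φ ^ 2 = φ + 1 := by
    rw [hφ]; field_simp; nlinarith [h5]
  refine ⟨![φ, 1, -1, -φ], ?_, ?_⟩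
  · intro h
    have := congrFun h 1
    simp at this
  · funext i
    fin_cases i <;>
      simp [Matrix.mulVec, dotProduct, Fin.sum_univ_succ] <;>
      field_simp <;>
      first
        | linear_combination s * hsq
        | linear_combination t * hsq
        | linear_combination (-t) * hsq
        | linear_combination (-s) * hsq
end
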